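/- Abstract form of Lemma 3.9 (well-posedness of the constrained saddle-point problem): there exists a unique pair (z, p) ∈ V × Q such that a(z, φ) + a(φ, p) = F(φ) for all φ ∈ V and a(z, ξ) = 0 for all ξ ∈ Q; moreover ‖z‖_a + ‖p‖_a ≤ (2/√α) · ‖F‖, where ‖F‖ is the operator norm of F. -/

import Mathlib

set_option maxHeartbeats 2000000

/-- Abstract form of Lemma 3.9: well-posedness of the constrained saddle-point problem.
For a bounded, coercive, symmetric bilinear form `a` on a Hilbert space `V`, a closed
subspace `Q ⊆ V` and a continuous linear functional `F`, there is a unique pair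
`(z, p) ∈ V × Q` with `a(z, φ) + a(φ, p) = F(φ)` for all `φ ∈ V` and `a(z, ξ) = 0`
for all `ξ ∈ Q`; moreover `‖z‖_a + ‖p‖_a ≤ (2/√α) ‖F‖`. -/
theorem saddle_point_well_posed
    {V : Type*} [NormedAddCommGroup V] [InnerProductSpace ℝ V] [CompleteSpace V]
    (a : V →ₗ[ℝ] V →ₗ[ℝ] ℝ) (M α : ℝ) (hM : 0 < M) (hα : 0 < α)
    (hsymm : ∀ u v, a u v = a v u)
    (hbound : ∀ u v, |a u v| ≤ M * ‖u‖ * ‖v‖)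
    (hcoer : ∀ v, α * ‖v‖ ^ 2 ≤ a v v)
    (Q : Submodule ℝ V) (hQ : IsClosed (Q : Set V))
    (F : V →L[ℝ] ℝ) :
    (∃! zp : V × V, zp.2 ∈ Q ∧ (∀ φ : V, a zp.1 φ + a φ zp.2 = F φ) ∧
        (∀ ξ ∈ Q, a zp.1 ξ = 0)) ∧
    (∀ z p : V, p ∈ Q → (∀ φ : V, a z φ + a φ p = F φ) → (∀ ξ ∈ Q, a z ξ = 0) →
      Real.sqrt (a z z) + Real.sqrt (a p p) ≤ (2 / Real.sqrt α) * ‖F‖) := by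
  have hsa : 0 < Real.sqrt α := Real.sqrt_pos.mpr hα
  have hannonneg : ∀ v : V, (0:ℝ) ≤ a v v := fun v =>
    le_trans (by positivity) (hcoer v)
  have hzero : ∀ u : V, a u u ≤ 0 → u = 0 := by
    intro u hu
    have h1 : α * ‖u‖ ^ 2 ≤ 0 := le_trans (hcoer u) hu
    have h2 : ‖u‖ ^ 2 ≤ 0 := nonpos_of_mul_nonpos_right (by linarith [mul_comm α (‖u‖^2)]) hα
    have : ‖u‖ = 0 := by nlinarith [sq_nonneg ‖u‖, norm_nonneg u]
    exact norm_eq_zero.mp this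
  -- norm comparison
  have hnormle : ∀ v : V, ‖v‖ ≤ Real.sqrt (a v v) / Real.sqrt α := by
    intro v
    rw [le_div_iff₀ hsa]
    rw [mul_comm ‖v‖ (Real.sqrt α)]
    have : Real.sqrt α * ‖v‖ = Real.sqrt (α * ‖v‖ ^ 2) := by
      rw [Real.sqrt_mul hα.le, Real.sqrt_sq (norm_nonneg v)]
    rw [this]
    exact Real.sqrt_le_sqrt (hcoer v)
  -- the a-norm bound for any solution component
  have key : ∀ v : V, a v v = F v → Real.sqrt (a v v) ≤ ‖F‖ / Real.sqrt α := by
    intro v hv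
    set s := Real.sqrt (a v v) with hs
    have hs2 : s ^ 2 = a v v := Real.sq_sqrt (hannonneg v)
    have hsnn : 0 ≤ s := Real.sqrt_nonneg _
    rcases eq_or_lt_of_le hsnn with h0 | hpos
    · rw [← h0]; positivity
    · have h1 : s ^ 2 ≤ ‖F‖ * (s / Real.sqrt α) := by
        calc s ^ 2 = F v := by rw [hs2, hv]
        _ ≤ ‖F‖ * ‖v‖ := le_trans (le_abs_self _) (F.le_opNorm v)
        _ ≤ ‖F‖ * (s / Real.sqrt α) := by
            exact mul_le_mul_of_nonneg_left (hnormle v) (norm_nonneg F)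
      rw [le_div_iff₀ hsa]
      have h2 : ‖F‖ * (s / Real.sqrt α) * Real.sqrt α = ‖F‖ * s := by
        field_simp
      nlinarith [mul_le_mul_of_nonneg_right h1 hsa.le]
  -- build the continuous bilinear form
  have hbound' : ∀ u v : V, ‖a u v‖ ≤ M * ‖u‖ * ‖v‖ := by
    intro u v; rw [Real.norm_eq_abs]; exact hbound u v
  set B : V →L[ℝ] V →L[ℝ] ℝ := LinearMap.mkContinuous₂ a M hbound' with hB
  have hBa : ∀ u v : V, B u v = a u v := fun u v => rfl
  have coercive : IsCoercive B := by
    refine ⟨α, hα, fun u => ?_⟩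
    rw [hBa]
    calc α * ‖u‖ * ‖u‖ = α * ‖u‖ ^ 2 := by ring
    _ ≤ a u u := hcoer u
  -- solve a w φ = F φ
  obtain ⟨w, hwF⟩ : ∃ w : V, ∀ φ : V, a w φ = F φ := by
    set E := coercive.continuousLinearEquivOfBilin with hE
    refine ⟨E.symm ((InnerProductSpace.toDual ℝ V).symm F), fun φ => ?_⟩
    have h1 : (inner ℝ (E (E.symm ((InnerProductSpace.toDual ℝ V).symm F))) φ : ℝ)
        = B (E.symm ((InnerProductSpace.toDual ℝ V).symm F)) φ :=
      coercive.continuousLinearEquivOfBilin_apply _ φ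
    rw [E.apply_symm_apply, InnerProductSpace.toDual_symm_apply] at h1
    rw [← hBa, ← h1]
  -- project onto Q
  haveI : CompleteSpace Q := hQ.completeSpace_coe
  set aQ : Q →ₗ[ℝ] Q →ₗ[ℝ] ℝ := LinearMap.mk₂ ℝ (fun u v : Q => a u v)
    (fun u v w => by simp) (fun c u v => by simp) (fun u v w => by simp)
    (fun c u v => by simp) with haQ
  have haQa : ∀ u v : Q, aQ u v = a (u : V) (v : V) := fun u v => rfl
  have hboundQ : ∀ u v : Q, ‖aQ u v‖ ≤ M * ‖u‖ * ‖v‖ := by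
    intro u v
    rw [haQa, Real.norm_eq_abs]
    simpa using hbound (u : V) (v : V)
  set BQ : Q →L[ℝ] Q →L[ℝ] ℝ := LinearMap.mkContinuous₂ aQ M hboundQ with hBQ
  have hBQa : ∀ u v : Q, BQ u v = a (u : V) (v : V) := fun u v => rfl
  have coerciveQ : IsCoercive BQ := by
    refine ⟨α, hα, fun u => ?_⟩
    rw [hBQa]
    calc α * ‖u‖ * ‖u‖ = α * ‖(u : V)‖ ^ 2 := by rw [Submodule.coe_norm]; ring
    _ ≤ a (u : V) (u : V) := hcoer _
  set G : Q →L[ℝ] ℝ := (B w).comp Q.subtypeL with hG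
  have hGa : ∀ ξ : Q, G ξ = a w (ξ : V) := fun ξ => rfl
  obtain ⟨p', hpw⟩ : ∃ p' : Q, ∀ ξ : Q, a (p' : V) (ξ : V) = a w (ξ : V) := by
    set EQ := coerciveQ.continuousLinearEquivOfBilin with hEQ
    refine ⟨EQ.symm ((InnerProductSpace.toDual ℝ Q).symm G), fun ξ => ?_⟩
    have h1 : (inner ℝ (EQ (EQ.symm ((InnerProductSpace.toDual ℝ Q).symm G))) ξ : ℝ)
        = BQ (EQ.symm ((InnerProductSpace.toDual ℝ Q).symm G)) ξ :=
      coerciveQ.continuousLinearEquivOfBilin_apply _ ξ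
    rw [EQ.apply_symm_apply, InnerProductSpace.toDual_symm_apply] at h1
    rw [← hGa, ← hBQa, ← h1]
  set p : V := (p' : V) with hpdef
  set z : V := w - p with hz
  have hpQ : p ∈ Q := p'.2
  have heq1 : ∀ φ : V, a z φ + a φ p = F φ := by
    intro φ
    rw [hz, map_sub, LinearMap.sub_apply, hsymm φ p]
    rw [← hwF φ]; ring
  have heq2 : ∀ ξ ∈ Q, a z ξ = 0 := by
    intro ξ hξ
    rw [hz, map_sub, LinearMap.sub_apply]
    rw [show a p ξ = a w ξ from hpw ⟨ξ, hξ⟩]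
    ring
  clear_value z p B BQ G aQ
  constructor
  · refine ⟨(z, p), ⟨hpQ, heq1, heq2⟩, ?_⟩
    rintro ⟨z2, p2⟩ ⟨hp2, heq1', heq2'⟩
    have husum : z2 + p2 = z + p := by
      have hdiff : ∀ φ : V, a ((z2 + p2) - (z + p)) φ = 0 := by
        intro φ
        have e1 := heq1 φ
        have e2 := heq1' φ
        rw [hsymm φ p] at e1
        rw [hsymm φ p2] at e2
        simp only [map_sub, map_add, LinearMap.sub_apply, LinearMap.add_apply]
        linarith
      have := hdiff ((z2 + p2) - (z + p))
      have h0 := hzero _ (le_of_eq this)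
      exact sub_eq_zero.mp h0
    have hd : p2 - p ∈ Q := Q.sub_mem hp2 hpQ
    have hzd : z - z2 = p2 - p := by
      rw [sub_eq_sub_iff_add_eq_add, ← husum]; abel
    have hadd : a (p2 - p) (p2 - p) = 0 := by
      have h1 : a z (p2 - p) = 0 := heq2 _ hd
      have h2 : a z2 (p2 - p) = 0 := heq2' _ hd
      have e := congrArg (fun f : V →ₗ[ℝ] ℝ => f (p2 - p)) (map_sub a z z2)
      simp only [LinearMap.sub_apply] at e
      rw [hzd] at e
      rw [e, h1, h2, sub_zero]
    have hp20 : p2 - p = 0 := hzero _ (le_of_eq hadd)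
    have hpe : p2 = p := sub_eq_zero.mp hp20
    have hze : z2 = z := by
      have := husum
      rw [hpe] at this
      exact add_right_cancel this
    rw [Prod.mk.injEq]; exact ⟨hze, hpe⟩
  · intro z0 p0 hp0 heqa heqb
    have hz0 : a z0 z0 = F z0 := by
      have := heqa z0
      rw [heqb p0 hp0] at this
      linarith
    have hp0' : a p0 p0 = F p0 := by
      have := heqa p0
      rw [heqb p0 hp0] at this
      linarith
    have k1 := key z0 hz0
    have k2 := key p0 hp0'
    have : Real.sqrt (a z0 z0) + Real.sqrt (a p0 p0) ≤ 2 * (‖F‖ / Real.sqrt α) := by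
      linarith
    calc Real.sqrt (a z0 z0) + Real.sqrt (a p0 p0) ≤ 2 * (‖F‖ / Real.sqrt α) := this
    _ = (2 / Real.sqrt α) * ‖F‖ := by ring
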